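/- If an ancillary statistic U for model M is not a function of some maximal ancillary V (i.e. (U,V) is not ancillary while V is maximal), then U is not a strong ancillary for M. -/

import Mathlib

open Finset
open scoped Classical

variable {X : Type*} [Fintype X] {Θ : Type*}

/-- Marginal distribution of the statistic `U` under `P θ`. -/
noncomputable def margin {I : Type*} (P : Θ → X → ℝ) (U : X → I) (θ : Θ) (i : I) : ℝ :=
  ∑ x ∈ Finset.univ.filter (fun x => U x = i), P θ x

/-- `P` is a statistical model: each `P θ` is a probability distribution on `X`. -/
def IsModel (P : Θ → X → ℝ) : Prop :=
  (∀ θ x, 0 ≤ P θ x) ∧ ∀ θ, ∑ x, P θ x = 1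

/-- A statistic is ancillary when its marginal distribution is parameter free. -/
def Ancillary {I : Type*} (P : Θ → X → ℝ) (U : X → I) : Prop :=
  ∀ θ₁ θ₂ i, margin P U θ₁ i = margin P U θ₂ i

/-- The mixture model `Σ_i p_i M_{|V=i}` (as a density on `X`). -/
noncomputable def mix (P : Θ → X → ℝ) (V : X → ℕ) (p : ℕ → ℝ) : Θ → X → ℝ :=
  fun θ x => p (V x) * (P θ x / margin P V θ (V x))

/-- `p` is a probability distribution on the values of `V`, supported where `P_V > 0`. -/
def ProbWts (P : Θ → X → ℝ) (V : X → ℕ) (p : ℕ → ℝ) : Prop :=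
  (∀ i, 0 ≤ p i) ∧ (∑' i, p i) = 1 ∧ ∀ θ i, 0 < p i → 0 < margin P V θ i

/-- `U` is stable: changing the distribution of any other ancillary leaves `U` ancillary. -/
def StableAnc (P : Θ → X → ℝ) (U : X → ℕ) : Prop :=
  Ancillary P U ∧ ∀ (V : X → ℕ) (p : ℕ → ℝ),
    Ancillary P V → ProbWts P V p → Ancillary (mix P V p) U

/-- `U` is strong: changing the distribution of `U` leaves every ancillary ancillary. -/
def StrongAnc (P : Θ → X → ℝ) (U : X → ℕ) : Prop :=
  Ancillary P U ∧ ∀ (V : X → ℕ) (p : ℕ → ℝ),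
    Ancillary P V → ProbWts P U p → Ancillary (mix P U p) V

/-- `U` is a function of `V`. -/
def FunctionOf {I J : Type*} (U : X → I) (V : X → J) : Prop :=
  ∃ h : J → I, ∀ x, U x = h (V x)

/-- A maximal ancillary: any ancillary of which it is a function is a 1-1 relabelling. -/
def MaximalAnc (P : Θ → X → ℝ) (V : X → ℕ) : Prop :=
  Ancillary P V ∧ ∀ W : X → ℕ, Ancillary P W → FunctionOf V W →
    ∀ x y, V x = V y → W x = W y

/-- A minimal ancillary: a function of every maximal ancillary. -/
def MinimalAnc (P : Θ → X → ℝ) (U : X → ℕ) : Prop :=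
  Ancillary P U ∧ ∀ V : X → ℕ, MaximalAnc P V → FunctionOf U V

/-- If ancillary `U` is not a function of the maximal ancillary `V`, in the sense that
the pair `(U, V)` is not ancillary while `V` is maximal, then `U` is not strong. -/
lemma margin_eq_sum_ite {X : Type*} [Fintype X] {Θ : Type*} {I : Type*}
    (P : Θ → X → ℝ) (W : X → I) (θ : Θ) (k : I) :
    margin P W θ k = ∑ x, if W x = k then P θ x else 0 :=
  (Finset.sum_filter _ _)

theorem not_strong_of_pair_not_ancillary (P : Θ → X → ℝ) (hP : IsModel P)
    (U V : X → ℕ) (hU : Ancillary P U) (hV : MaximalAnc P V)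
    (hpair : ¬ Ancillary P (fun x => (U x, V x))) :
    ¬ StrongAnc P U := by
  rintro ⟨-, hstrong⟩
  apply hpair
  rintro θ₁ θ₂ ⟨i, j⟩
  by_cases hm : 0 < margin P U θ₁ i
  · set p : ℕ → ℝ := fun k => if k = i then 1 else 0 with hp
    have hwts : ProbWts P U p := by
      refine ⟨fun k => ?_, ?_, ?_⟩
      · dsimp only [p]; split <;> norm_num
      · exact tsum_ite_eq i (fun _ => (1 : ℝ))
      · intro θ k hk
        have hki : k = i := by
          by_contra hne
          simp [p, hne] at hk
        rw [hki, hU θ θ₁ i]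
        exact hm
    have key : ∀ θ, margin (mix P U p) V θ j
        = margin P (fun x => (U x, V x)) θ (i, j) / margin P U θ₁ i := by
      intro θ
      rw [margin_eq_sum_ite, margin_eq_sum_ite, Finset.sum_div]
      refine Finset.sum_congr rfl fun x _ => ?_
      by_cases hxi : U x = i
      · by_cases hxj : V x = j
        · simp [mix, p, hxi, hxj, hU θ θ₁ i, Prod.mk.injEq]
        · simp [mix, p, hxi, hxj, Prod.mk.injEq]
      · by_cases hxj : V x = j
        · simp [mix, p, hxi, hxj, Prod.mk.injEq]
        · simp [mix, p, hxi, hxj, Prod.mk.injEq]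
    have h := hstrong V p hV.1 hwts θ₁ θ₂ j
    rw [key θ₁, key θ₂] at h
    have hm' : margin P U θ₁ i ≠ 0 := hm.ne'
    field_simp [hm'] at h
    exact h
  · have hnonneg : ∀ θ, 0 ≤ margin P U θ i :=
      fun θ => Finset.sum_nonneg fun x _ => hP.1 θ x
    have hm0 : margin P U θ₁ i = 0 := le_antisymm (not_lt.mp hm) (hnonneg θ₁)
    have hzero : ∀ θ, margin P (fun x => (U x, V x)) θ (i, j) = 0 := by
      intro θ
      have hmθ := (margin_eq_sum_ite P U θ i).symm.trans ((hU θ θ₁ i).trans hm0)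
      have hall := (Finset.sum_eq_zero_iff_of_nonneg
        (fun x _ => by split_ifs; exacts [hP.1 θ x, le_rfl])).mp hmθ
      rw [margin_eq_sum_ite]
      refine Finset.sum_eq_zero fun x _ => ?_
      by_cases hxi : U x = i
      · have h0 := hall x (Finset.mem_univ x)
        rw [if_pos hxi] at h0
        simp [h0]
      · simp [Prod.mk.injEq, hxi]
    rw [hzero θ₁, hzero θ₂]
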